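/- Let K be a division ring, σ an endomorphism of K, δ a σ-derivation of K, and f(t) ∈ R = K[t;σ,δ] a nonzero polynomial of degree n. Then the set of right roots of f (elements a ∈ K with f(a) = 0) is contained in the union of at most n distinct (σ,δ)-conjugacy classes Δ(a₁),…,Δ(a_r), r ≤ n. -/

import Mathlib

namespace GordonMotzkinAux

variable {K R : Type*} [DivisionRing K] [Ring R]
variable (ι : K →+* R) (t : R) (σ : K →+* K) (δ : K →+ K)

/-- `g` has a representation with coefficients vanishing in degrees `≥ m`. -/
def DegLt (g : R) (m : ℕ) : Prop :=
  ∃ e : ℕ →₀ K, (g = e.sum fun i b => ι b * t ^ i) ∧ ∀ i, m ≤ i → e i = 0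

lemma F_zero (i : ℕ) : ι (0 : K) * t ^ i = 0 := by simp

lemma F_add (i : ℕ) (b₁ b₂ : K) :
    ι (b₁ + b₂) * t ^ i = ι b₁ * t ^ i + ι b₂ * t ^ i := by
  rw [map_add, add_mul]

lemma degLt_zero (m : ℕ) : DegLt ι t (0 : R) m :=
  ⟨0, by simp [Finsupp.sum_zero_index], by simp⟩

lemma degLt_mono {g : R} {m m' : ℕ} (h : DegLt ι t g m) (hm : m ≤ m') :
    DegLt ι t g m' := by
  obtain ⟨e, he, hb⟩ := h
  exact ⟨e, he, fun i hi => hb i (le_trans hm hi)⟩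

lemma degLt_add {g₁ g₂ : R} {m : ℕ} (h₁ : DegLt ι t g₁ m) (h₂ : DegLt ι t g₂ m) :
    DegLt ι t (g₁ + g₂) m := by
  obtain ⟨e₁, he₁, hb₁⟩ := h₁
  obtain ⟨e₂, he₂, hb₂⟩ := h₂
  refine ⟨e₁ + e₂, ?_, fun i hi => ?_⟩
  · rw [Finsupp.sum_add_index' (fun i => F_zero ι t i) (fun i b₁ b₂ => F_add ι t i b₁ b₂),
      he₁, he₂]
  · simp [Finsupp.add_apply, hb₁ i hi, hb₂ i hi]

lemma degLt_neg {g : R} {m : ℕ} (h : DegLt ι t g m) : DegLt ι t (-g) m := by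
  obtain ⟨e, he, hb⟩ := h
  refine ⟨-e, ?_, fun i hi => by simp [hb i hi]⟩
  have hsum : e.sum (fun i b => ι b * t ^ i) + (-e).sum (fun i b => ι b * t ^ i) = 0 := by
    rw [← Finsupp.sum_add_index' (fun i => F_zero ι t i) (fun i b₁ b₂ => F_add ι t i b₁ b₂)]
    simp [Finsupp.sum_zero_index]
  rw [he]
  exact (neg_eq_of_add_eq_zero_right hsum)

lemma degLt_single {b : K} {i m : ℕ} (hi : i < m) : DegLt ι t (ι b * t ^ i) m := by
  refine ⟨Finsupp.single i b, ?_, fun j hj => ?_⟩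
  · rw [Finsupp.sum_single_index (F_zero ι t i)]
  · exact Finsupp.single_eq_of_ne (by omega)

lemma degLt_sum {α : Type*} {s : Finset α} {G : α → R} {m : ℕ}
    (h : ∀ x ∈ s, DegLt ι t (G x) m) : DegLt ι t (∑ x ∈ s, G x) m := by
  classical
  induction s using Finset.induction_on with
  | empty => simpa using degLt_zero ι t m
  | insert _ _ hx ih =>
    rw [Finset.sum_insert hx]
    exact degLt_add ι t (h _ (Finset.mem_insert_self _ _))
      (ih fun x hxs => h x (Finset.mem_insert_of_mem hxs))

lemma degLt_mul_t {g : R} {m : ℕ} (h : DegLt ι t g m) : DegLt ι t (g * t) (m + 1) := by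
  obtain ⟨e, he, hb⟩ := h
  refine ⟨Finsupp.mapDomain Nat.succ e, ?_, fun i hi => ?_⟩
  · rw [he, Finsupp.sum_mapDomain_index_inj Nat.succ_injective, Finsupp.sum_mul]
    refine Finsupp.sum_congr fun i _ => ?_
    rw [mul_assoc, ← pow_succ]
  · obtain ⟨j, rfl⟩ : ∃ j, i = j + 1 := ⟨i - 1, by omega⟩
    rw [show j + 1 = Nat.succ j from rfl, Finsupp.mapDomain_apply Nat.succ_injective]
    exact hb j (by omega)

lemma degLt_smul {g : R} {m : ℕ} (k : K) (h : DegLt ι t g m) :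
    DegLt ι t (ι k * g) m := by
  obtain ⟨e, he, hb⟩ := h
  refine ⟨e.mapRange (k * ·) (mul_zero k), ?_, fun i hi => ?_⟩
  · rw [Finsupp.sum_mapRange_index (fun i => F_zero ι t i), he, Finsupp.mul_sum]
    refine Finsupp.sum_congr fun i _ => ?_
    rw [map_mul, mul_assoc]
  · simp [Finsupp.mapRange_apply, hb i hi]

variable (hrel : ∀ x : K, t * ι x = ι (σ x) * t + ι (δ x))

include hrel in
lemma degLt_tpow_mul (m : ℕ) (b : K) : DegLt ι t (t ^ m * ι b) (m + 1) := by
  induction m generalizing b with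
  | zero =>
    simpa using degLt_single ι t (b := b) (i := 0) (m := 1) Nat.zero_lt_one
  | succ m IH =>
    have : t ^ (m + 1) * ι b = t ^ m * ι (σ b) * t + t ^ m * ι (δ b) := by
      rw [pow_succ, mul_assoc, hrel, mul_add, ← mul_assoc]
    rw [this]
    exact degLt_add ι t (degLt_mul_t ι t (IH (σ b)))
      (degLt_mono ι t (IH (δ b)) (by omega))

include hrel in
lemma degLt_mul_ι {g : R} {M : ℕ} (b : K) (h : DegLt ι t g M) :
    DegLt ι t (g * ι b) M := by
  obtain ⟨e, he, hb⟩ := h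
  rw [he, Finsupp.sum_mul]
  refine degLt_sum ι t fun i hi => ?_
  have hiM : i < M := by
    by_contra hle
    exact Finsupp.mem_support_iff.mp hi (hb i (by omega))
  show DegLt ι t (ι (e i) * t ^ i * ι b) M
  rw [mul_assoc]
  exact degLt_mono ι t (degLt_smul ι t (e i) (degLt_tpow_mul ι t σ δ hrel i b)) (by omega)

include hrel in
/-- The leading coefficient of `g * (t - ι a)` is the leading coefficient of `g`,
shifted up by one degree. -/
lemma lead_coeff (d : ℕ →₀ K) (m : ℕ) (a : K) (hm : d m ≠ 0)
    (hb : ∀ i, m < i → d i = 0) :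
    ∃ e : ℕ →₀ K, ((d.sum fun i b => ι b * t ^ i) * (t - ι a) = e.sum fun i b => ι b * t ^ i)
      ∧ e (m + 1) = d m ∧ ∀ i, m + 1 < i → e i = 0 := by
  classical
  set g : R := d.sum fun i b => ι b * t ^ i with hg
  have hmul_ι : DegLt ι t (g * ι a) (m + 1) :=
    degLt_mul_ι ι t σ δ hrel a ⟨d, rfl, fun i hi => hb i (by omega)⟩
  have hmem : m ∈ d.support := Finsupp.mem_support_iff.mpr hm
  have hgt : g * t = ι (d m) * t ^ (m + 1) + ∑ i ∈ d.support.erase m, ι (d i) * t ^ (i + 1) := by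
    rw [hg, Finsupp.sum_mul]
    rw [show (d.sum fun i b => ι b * t ^ i * t) = ∑ i ∈ d.support, ι (d i) * t ^ (i + 1) from
      Finset.sum_congr rfl fun i _ => by show ι (d i) * t ^ i * t = _; rw [mul_assoc, ← pow_succ]]
    rw [← Finset.add_sum_erase _ _ hmem]
  have hrest : DegLt ι t (∑ i ∈ d.support.erase m, ι (d i) * t ^ (i + 1)) (m + 1) := by
    refine degLt_sum ι t fun i hi => ?_
    have h1 : i ≠ m := (Finset.mem_erase.mp hi).1
    have h2 : i ∈ d.support := (Finset.mem_erase.mp hi).2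
    have : i < m := by
      rcases lt_or_ge i m with h | h
      · exact h
      · exact absurd (hb i (by omega)) (Finsupp.mem_support_iff.mp h2)
    exact degLt_single ι t (by omega)
  have hlow : DegLt ι t (g * (t - ι a) - ι (d m) * t ^ (m + 1)) (m + 1) := by
    have : g * (t - ι a) - ι (d m) * t ^ (m + 1) =
        (∑ i ∈ d.support.erase m, ι (d i) * t ^ (i + 1)) + -(g * ι a) := by
      rw [mul_sub, hgt]; abel
    rw [this]
    exact degLt_add ι t hrest (degLt_neg ι t hmul_ι)
  obtain ⟨eh, heh, hbh⟩ := hlow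
  refine ⟨Finsupp.single (m + 1) (d m) + eh, ?_, ?_, fun i hi => ?_⟩
  · rw [Finsupp.sum_add_index' (fun i => F_zero ι t i) (fun i b₁ b₂ => F_add ι t i b₁ b₂),
      Finsupp.sum_single_index (F_zero ι t (m + 1)), ← heh]
    abel
  · simp [Finsupp.add_apply, Finsupp.single_eq_same, hbh (m + 1) le_rfl]
  · simp [Finsupp.add_apply, Finsupp.single_eq_of_ne' (by omega : m + 1 ≠ i),
      hbh i (by omega)]

variable (hbasis : ∀ f : R, ∃! c : ℕ →₀ K, f = c.sum fun i b => ι b * t ^ i)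

include hbasis in
lemma rep_unique {f : R} {c₁ c₂ : ℕ →₀ K}
    (h₁ : f = c₁.sum fun i b => ι b * t ^ i)
    (h₂ : f = c₂.sum fun i b => ι b * t ^ i) : c₁ = c₂ := by
  obtain ⟨c₀, -, hu⟩ := hbasis f
  rw [hu c₁ h₁, hu c₂ h₂]

include hbasis in
lemma iota_eq_zero {k : K} (h : ι k = 0) : k = 0 := by
  have h1 : (0 : R) = (Finsupp.single 0 k).sum fun i b => ι b * t ^ i := by
    rw [Finsupp.sum_single_index (F_zero ι t 0)]
    simp [← h]
  have h2 : (0 : R) = (0 : ℕ →₀ K).sum fun i b => ι b * t ^ i := by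
    simp [Finsupp.sum_zero_index]
  have := rep_unique ι t hbasis h1 h2
  exact (Finsupp.single_eq_zero.mp this)

include hrel hbasis in
lemma const_factor {k : K} {g : R} {a : K} (h : ι k = g * (t - ι a)) : k = 0 := by
  by_cases hgz : g = 0
  · subst hgz
    rw [zero_mul] at h
    exact iota_eq_zero ι t hbasis h
  · obtain ⟨d, hd, -⟩ := hbasis g
    have hdne : d ≠ 0 := by
      rintro rfl
      exact hgz (by simpa [Finsupp.sum_zero_index] using hd)
    have hsupp : d.support.Nonempty := Finsupp.support_nonempty_iff.mpr hdne
    set m := d.support.max' hsupp with hmdef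
    have hdm : d m ≠ 0 := Finsupp.mem_support_iff.mp (d.support.max'_mem hsupp)
    have hdb : ∀ i, m < i → d i = 0 := by
      intro i hi
      by_contra hne
      exact absurd (d.support.le_max' i (Finsupp.mem_support_iff.mpr hne)) (by omega)
    obtain ⟨e, he, het, -⟩ := lead_coeff ι t σ δ hrel d m a hdm hdb
    have hrep1 : ι k = (Finsupp.single 0 k).sum fun i b => ι b * t ^ i := by
      rw [Finsupp.sum_single_index (F_zero ι t 0)]; simp
    have hrep2 : ι k = e.sum fun i b => ι b * t ^ i := by rw [h, hd, he]
    have := rep_unique ι t hbasis hrep1 hrep2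
    have h0 : (Finsupp.single 0 k : ℕ →₀ K) (m + 1) = 0 :=
      Finsupp.single_eq_of_ne (by omega)
    rw [this, het] at h0
    exact absurd h0 hdm

variable (eval : R → K → K)
variable (heval : ∀ (f : R) (a : K), ∃ g : R, f - ι (eval f a) = g * (t - ι a))

include hrel hbasis heval in
lemma eval_unique {f : R} {k : K} {g : R} {a : K}
    (h : f - ι k = g * (t - ι a)) : eval f a = k := by
  obtain ⟨g₀, h₀⟩ := heval f a
  have h2 : ι (eval f a - k) = (g - g₀) * (t - ι a) := by
    rw [map_sub, sub_mul, ← h, ← h₀]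
    abel
  have := const_factor ι t σ δ hrel hbasis h2
  exact sub_eq_zero.mp this

variable (hδ : ∀ a b : K, δ (a * b) = σ a * δ b + δ a * b)

include hδ in
lemma delta_one : δ 1 = 0 := by
  have h := hδ 1 1
  simp only [mul_one, one_mul, map_one] at h
  exact (left_eq_add.mp h)

include hδ in
lemma conj_comp (a x y : K) (hx : x ≠ 0) (hy : y ≠ 0) :
    σ y * (σ x * a * x⁻¹ + δ x * x⁻¹) * y⁻¹ + δ y * y⁻¹ =
      σ (y * x) * a * (y * x)⁻¹ + δ (y * x) * (y * x)⁻¹ := by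
  have hxx : x * x⁻¹ = 1 := mul_inv_cancel₀ hx
  rw [map_mul, hδ, mul_inv_rev, mul_add, add_mul, add_mul]
  have h3 : δ y * x * (x⁻¹ * y⁻¹) = δ y * y⁻¹ := by
    rw [mul_assoc, ← mul_assoc x, hxx, one_mul]
  rw [h3]
  simp only [mul_assoc]
  abel

include hrel in
lemma factor_identity (b x : K) (hx : x ≠ 0) :
    (t - ι (σ x * b * x⁻¹ + δ x * x⁻¹)) * ι x = ι (σ x) * (t - ι b) := by
  have hinv : x⁻¹ * x = 1 := inv_mul_cancel₀ hx
  have hK : (σ x * b * x⁻¹ + δ x * x⁻¹) * x = σ x * b + δ x := by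
    simp only [add_mul, mul_assoc, hinv, mul_one]
  rw [sub_mul, hrel, ← map_mul, hK, map_add, map_mul, mul_sub]
  abel

include hrel hbasis heval in
lemma eval_prod (g : R) (a b : K) (hba : b ≠ a) :
    eval (g * (t - ι a)) b =
      eval g (σ (b - a) * b * (b - a)⁻¹ + δ (b - a) * (b - a)⁻¹) * (b - a) := by
  set c := b - a with hcdef
  have hc0 : c ≠ 0 := sub_ne_zero.mpr hba
  set b' := σ c * b * c⁻¹ + δ c * c⁻¹ with hb'def
  obtain ⟨h, hh⟩ := heval g b'
  set e := eval g b' with hedef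
  apply eval_unique ι t σ δ hrel hbasis eval heval
    (g := ι e + (h * (t - ι b') + h * ι (σ c)))
  have hg : g = ι e + h * (t - ι b') := by
    rw [← hh]; abel
  have hfac : (t - ι b') * ι c = ι (σ c) * (t - ι b) :=
    factor_identity ι t σ δ hrel b c hc0
  have hta : t - ι a = (t - ι b) + ι c := by
    rw [hcdef, map_sub]; abel
  calc g * (t - ι a) - ι (e * c)
      = (ι e + h * (t - ι b')) * ((t - ι b) + ι c) - ι e * ι c := by
        rw [← hg, ← hta, map_mul]
    _ = ι e * (t - ι b) + (h * ((t - ι b') * ι c) + h * ((t - ι b') * (t - ι b))) := by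
        noncomm_ring
    _ = ι e * (t - ι b) + (h * (ι (σ c) * (t - ι b)) + h * ((t - ι b') * (t - ι b))) := by
        rw [hfac]
    _ = (ι e + (h * (t - ι b') + h * ι (σ c))) * (t - ι b) := by
        noncomm_ring

include hδ hrel hbasis heval in
theorem main : ∀ (n : ℕ) (f : R) (c : ℕ →₀ K),
    (f = c.sum fun i b => ι b * t ^ i) → c n ≠ 0 → (∀ i : ℕ, n < i → c i = 0) →
    ∃ (r : ℕ) (as : Fin r → K), r ≤ n ∧
      ∀ a : K, eval f a = 0 →
        ∃ (i : Fin r) (x : K), x ≠ 0 ∧ a = σ x * as i * x⁻¹ + δ x * x⁻¹ := by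
  intro n
  induction n using Nat.strong_induction_on with
  | _ n IH =>
    intro f c hc hlead hdeg
    by_cases hroot : ∃ a : K, eval f a = 0
    · obtain ⟨a₀, ha₀⟩ := hroot
      obtain ⟨g, hgfac⟩ := heval f a₀
      rw [ha₀, map_zero, sub_zero] at hgfac
      obtain ⟨d, hd, -⟩ := hbasis g
      have hdne : d ≠ 0 := by
        rintro rfl
        have hg0 : g = 0 := by simpa [Finsupp.sum_zero_index] using hd
        rw [hg0, zero_mul] at hgfac
        have : c = 0 := rep_unique ι t hbasis (hgfac ▸ hc)
          (by simp [Finsupp.sum_zero_index])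
        exact hlead (by simp [this])
      have hsupp : d.support.Nonempty := Finsupp.support_nonempty_iff.mpr hdne
      set m := d.support.max' hsupp with hmdef
      have hdm : d m ≠ 0 := Finsupp.mem_support_iff.mp (d.support.max'_mem hsupp)
      have hdb : ∀ i, m < i → d i = 0 := by
        intro i hi
        by_contra hne
        exact absurd (d.support.le_max' i (Finsupp.mem_support_iff.mpr hne)) (by omega)
      obtain ⟨e, he, het, -⟩ := lead_coeff ι t σ δ hrel d m a₀ hdm hdb
      have hce : c = e := by
        apply rep_unique ι t hbasis (f := f) hc
        rw [hgfac, hd, he]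
      have hmn : m < n := by
        have hcm : c (m + 1) ≠ 0 := by rw [hce, het]; exact hdm
        by_contra hge
        exact hcm (hdeg (m + 1) (by omega))
      obtain ⟨r, as, hr, hroots⟩ := IH m hmn g d hd hdm hdb
      refine ⟨r + 1, Fin.cons a₀ as, by omega, fun b hb => ?_⟩
      by_cases hba : b = a₀
      · refine ⟨0, 1, one_ne_zero, ?_⟩
        simp [hba, delta_one σ δ hδ, Fin.cons_zero]
      · have hc0 : b - a₀ ≠ 0 := sub_ne_zero.mpr hba
        have hprod := eval_prod ι t σ δ hrel hbasis eval heval g a₀ b hba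
        rw [← hgfac, hb] at hprod
        have hgb' : eval g (σ (b - a₀) * b * (b - a₀)⁻¹ + δ (b - a₀) * (b - a₀)⁻¹) = 0 := by
          rcases mul_eq_zero.mp hprod.symm with h | h
          · exact h
          · exact absurd h hc0
        obtain ⟨i, x, hx, hbx⟩ := hroots _ hgb'
        refine ⟨i.succ, (b - a₀)⁻¹ * x, by
          exact mul_ne_zero (inv_ne_zero hc0) hx, ?_⟩
        have h1 := conj_comp σ δ hδ b (b - a₀) (b - a₀)⁻¹ hc0 (inv_ne_zero hc0)
        rw [inv_mul_cancel₀ hc0] at h1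
        simp only [map_one, one_mul, inv_one, mul_one, delta_one σ δ hδ, zero_mul,
          add_zero] at h1
        have h2 := conj_comp σ δ hδ (as i) x (b - a₀)⁻¹ hx (inv_ne_zero hc0)
        rw [Fin.cons_succ]
        calc b = σ (b - a₀)⁻¹ * (σ (b - a₀) * b * (b - a₀)⁻¹ + δ (b - a₀) * (b - a₀)⁻¹) *
              ((b - a₀)⁻¹)⁻¹ + δ (b - a₀)⁻¹ * ((b - a₀)⁻¹)⁻¹ := h1.symm
          _ = σ (b - a₀)⁻¹ * (σ x * as i * x⁻¹ + δ x * x⁻¹) * ((b - a₀)⁻¹)⁻¹ +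
              δ (b - a₀)⁻¹ * ((b - a₀)⁻¹)⁻¹ := by rw [← hbx]
          _ = σ ((b - a₀)⁻¹ * x) * as i * ((b - a₀)⁻¹ * x)⁻¹ +
              δ ((b - a₀)⁻¹ * x) * ((b - a₀)⁻¹ * x)⁻¹ := h2
    · push_neg at hroot
      exact ⟨0, Fin.elim0, Nat.zero_le n, fun a ha => absurd ha (hroot a)⟩

end GordonMotzkinAux

/-- (Gordon–Motzkin type theorem.) Let `K` be a division ring and `R = K[t;σ,δ]` an
Ore extension (ring `R` with `ι : K → R`, `t·x = σ(x)t + δ(x)`, with the monomials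
`tⁱ` a left `K`-basis, and `eval` the right evaluation characterized by
`f − ι(eval f a) ∈ R(t − a)`).  If `f ≠ 0` has degree `n` then the right roots of `f`
lie in the union of at most `n` (σ,δ)-conjugacy classes `Δ(a₁),…,Δ(a_r)`, `r ≤ n`,
where `Δ(b) = {σ(x)bx⁻¹ + δ(x)x⁻¹ : x ≠ 0}`. -/
theorem roots_in_at_most_n_conjugacy_classes {K R : Type*} [DivisionRing K] [Ring R]
    (ι : K →+* R) (t : R) (σ : K →+* K) (δ : K →+ K)
    (hδ : ∀ a b : K, δ (a * b) = σ a * δ b + δ a * b)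
    (hrel : ∀ x : K, t * ι x = ι (σ x) * t + ι (δ x))
    (hbasis : ∀ f : R, ∃! c : ℕ →₀ K, f = c.sum fun i b => ι b * t ^ i)
    (eval : R → K → K)
    (heval : ∀ (f : R) (a : K), ∃ g : R, f - ι (eval f a) = g * (t - ι a))
    (f : R) (c : ℕ →₀ K) (n : ℕ)
    (hc : f = c.sum fun i b => ι b * t ^ i)
    (hlead : c n ≠ 0) (hdeg : ∀ i : ℕ, n < i → c i = 0) :
    ∃ (r : ℕ) (as : Fin r → K), r ≤ n ∧
      ∀ a : K, eval f a = 0 →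
        ∃ (i : Fin r) (x : K), x ≠ 0 ∧ a = σ x * as i * x⁻¹ + δ x * x⁻¹ := by
  exact GordonMotzkinAux.main ι t σ δ hrel hbasis eval heval hδ n f c hc hlead hdeg
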